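/- Let A be a commutative ring and let a₁, …, aₖ be a regular sequence generating the ideal I. Then for every n ≥ 0, the A/I-module Iⁿ/Iⁿ⁺¹ is a free module, with basis given by the residue classes of the monomials a₁^{α₁}⋯aₖ^{αₖ} where (α₁, …, αₖ) ranges over the k-tuples of natural numbers with α₁ + ⋯ + αₖ = n. -/

import Mathlib

open MvPolynomial

namespace QuasiReg

variable {A : Type} [CommRing A] {k : ℕ} (a : Fin k → A)

/-- The ideal generated by the first `c` elements of the sequence. -/
def pref (c : ℕ) : Ideal A := Ideal.span (a '' {i : Fin k | (i : ℕ) < c})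

variable {a}

lemma pref_mono {c c' : ℕ} (h : c ≤ c') : pref a c ≤ pref a c' :=
  Ideal.span_mono (Set.image_mono fun i hi => lt_of_lt_of_le hi h)

lemma a_mem_pref {c : ℕ} (i : Fin k) (hi : (i : ℕ) < c) : a i ∈ pref a c :=
  Ideal.subset_span ⟨i, hi, rfl⟩

lemma pref_stable {c : ℕ} (h : k ≤ c) : pref a (c + 1) = pref a c := by
  unfold pref
  have : {i : Fin k | (i : ℕ) < c + 1} = {i : Fin k | (i : ℕ) < c} := by
    ext i
    simp only [Set.mem_setOf_eq]
    exact ⟨fun _ => lt_of_lt_of_le i.2 h, fun _ => lt_of_lt_of_le i.2 (le_trans h (Nat.le_succ c))⟩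
  rw [this]

/-- Homogeneity of degree `d` (on coefficients). -/
def Hom (d : ℕ) (F : MvPolynomial (Fin k) A) : Prop :=
  ∀ m : Fin k →₀ ℕ, F.coeff m ≠ 0 → ∑ i, m i = d

/-- `F` only involves the first `c` variables. -/
def Vars (c : ℕ) (F : MvPolynomial (Fin k) A) : Prop :=
  ∀ m : Fin k →₀ ℕ, F.coeff m ≠ 0 → ∀ i : Fin k, c ≤ (i : ℕ) → m i = 0

lemma Hom.add {d : ℕ} {F G : MvPolynomial (Fin k) A} (hF : Hom d F) (hG : Hom d G) :
    Hom d (F + G) := by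
  intro m hm
  rw [coeff_add] at hm
  rcases (by by_contra h; push_neg at h; simp [h.1, h.2] at hm :
    F.coeff m ≠ 0 ∨ G.coeff m ≠ 0) with h | h
  · exact hF m h
  · exact hG m h

lemma Vars.add {c : ℕ} {F G : MvPolynomial (Fin k) A} (hF : Vars c F) (hG : Vars c G) :
    Vars c (F + G) := by
  intro m hm i hi
  rw [coeff_add] at hm
  rcases (by by_contra h; push_neg at h; simp [h.1, h.2] at hm :
    F.coeff m ≠ 0 ∨ G.coeff m ≠ 0) with h | h
  · exact hF m h i hi
  · exact hG m h i hi

lemma Hom.C_mul {d : ℕ} {F : MvPolynomial (Fin k) A} (hF : Hom d F) (r : A) :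
    Hom d (C r * F) := by
  intro m hm
  rw [coeff_C_mul] at hm
  exact hF m (fun h => hm (by rw [h, mul_zero]))

lemma Vars.C_mul {c : ℕ} {F : MvPolynomial (Fin k) A} (hF : Vars c F) (r : A) :
    Vars c (C r * F) := by
  intro m hm
  rw [coeff_C_mul] at hm
  exact hF m (fun h => hm (by rw [h, mul_zero]))

lemma Hom.mul {d e : ℕ} {F G : MvPolynomial (Fin k) A} (hF : Hom d F) (hG : Hom e G) :
    Hom (d + e) (F * G) := by
  intro m hm
  rw [coeff_mul] at hm
  obtain ⟨⟨p, q⟩, hpq, hne⟩ := Finset.exists_ne_zero_of_sum_ne_zero hm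
  rw [Finset.HasAntidiagonal.mem_antidiagonal] at hpq
  have hp : F.coeff p ≠ 0 := fun h => hne (by rw [h, zero_mul])
  have hq : G.coeff q ≠ 0 := fun h => hne (by rw [h, mul_zero])
  calc ∑ i, m i = ∑ i, (p i + q i) := by rw [← hpq]; rfl
    _ = (∑ i, p i) + ∑ i, q i := Finset.sum_add_distrib
    _ = d + e := by rw [hF p hp, hG q hq]

lemma Vars.mul {c : ℕ} {F G : MvPolynomial (Fin k) A} (hF : Vars c F) (hG : Vars c G) :
    Vars c (F * G) := by
  intro m hm i hi
  rw [coeff_mul] at hm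
  obtain ⟨⟨p, q⟩, hpq, hne⟩ := Finset.exists_ne_zero_of_sum_ne_zero hm
  rw [Finset.HasAntidiagonal.mem_antidiagonal] at hpq
  have hp : F.coeff p ≠ 0 := fun h => hne (by rw [h, zero_mul])
  have hq : G.coeff q ≠ 0 := fun h => hne (by rw [h, mul_zero])
  have : p i + q i = m i := by rw [← hpq]; rfl
  rw [← this, hF p hp i hi, hG q hq i hi]

/-- Key evaluation lemma: a polynomial homogeneous of degree `d` in the first `c`
variables with coefficients in `K` evaluates into `K * (pref a c) ^ d`. -/
lemma eval_mem_mul (K : Ideal A) {c d : ℕ} {F : MvPolynomial (Fin k) A}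
    (hHom : Hom d F) (hVars : Vars c F) (hK : ∀ m, F.coeff m ∈ K) :
    eval a F ∈ K * pref a c ^ d := by
  rw [eval_eq' a F]
  refine Ideal.sum_mem _ fun m hm => ?_
  have hm0 : F.coeff m ≠ 0 := mem_support_iff.mp hm
  refine Ideal.mul_mem_mul (hK m) ?_
  have : ∏ i, a i ^ m i ∈ ∏ i, pref a c ^ m i := by
    refine Ideal.prod_mem_prod fun i _ => ?_
    by_cases hic : (i : ℕ) < c
    · exact Ideal.pow_mem_pow (a_mem_pref i hic) _
    · rw [hVars m hm0 i (le_of_not_gt hic), pow_zero, pow_zero, Ideal.one_eq_top]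
      exact Submodule.mem_top
  rwa [Finset.prod_pow_eq_pow_sum, hHom m hm0] at this

lemma eval_mem_pow {c d : ℕ} {F : MvPolynomial (Fin k) A}
    (hHom : Hom d F) (hVars : Vars c F) : eval a F ∈ pref a c ^ d := by
  have := eval_mem_mul (a := a) ⊤ hHom hVars (fun m => Submodule.mem_top)
  rwa [Ideal.top_mul] at this

/-- Surjectivity in degree one. -/
lemma exists_poly_deg_one {c : ℕ} {x : A} (hx : x ∈ pref a c) :
    ∃ F : MvPolynomial (Fin k) A, Hom 1 F ∧ Vars c F ∧ eval a F = x := by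
  induction hx using Submodule.span_induction with
  | mem z hz =>
    obtain ⟨i, hi, rfl⟩ := hz
    refine ⟨X i, ?_, ?_, eval_X _⟩
    · intro m hm
      rw [coeff_X'] at hm
      split at hm
      case isTrue h =>
        subst h
        simp [Finsupp.single_apply]
      case isFalse => exact absurd rfl hm
    · intro m hm j hj
      rw [coeff_X'] at hm
      split at hm
      case isTrue h =>
        subst h
        rw [Finsupp.single_apply, if_neg]
        intro h; subst h; exact absurd hi (not_lt.mpr hj)
      case isFalse => exact absurd rfl hm
  | zero =>
    refine ⟨0, fun m hm => ?_, fun m hm => ?_, map_zero _⟩ <;> simp at hm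
  | add y z _ _ hy hz =>
    obtain ⟨F, hF1, hF2, hF3⟩ := hy
    obtain ⟨G, hG1, hG2, hG3⟩ := hz
    exact ⟨F + G, hF1.add hG1, hF2.add hG2, by rw [map_add, hF3, hG3]⟩
  | smul r y _ hy =>
    obtain ⟨F, hF1, hF2, hF3⟩ := hy
    exact ⟨C r * F, hF1.C_mul r, hF2.C_mul r, by rw [map_mul, eval_C, hF3]; rfl⟩

/-- Surjectivity: every element of `(pref a c) ^ d` is the value of a homogeneous
polynomial of degree `d` in the first `c` variables. -/
lemma exists_poly_of_mem_pow {c : ℕ} : ∀ {d : ℕ} {x : A}, x ∈ pref a c ^ d →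
    ∃ F : MvPolynomial (Fin k) A, Hom d F ∧ Vars c F ∧ eval a F = x := by
  intro d
  induction d with
  | zero =>
    intro x _
    refine ⟨C x, ?_, ?_, eval_C x⟩
    · intro m hm
      rw [coeff_C] at hm
      split at hm
      · subst ‹0 = m›; simp
      · exact absurd rfl hm
    · intro m hm i hi
      rw [coeff_C] at hm
      split at hm
      · subst ‹0 = m›; rfl
      · exact absurd rfl hm
  | succ d ih =>
    intro x hx
    rw [pow_succ] at hx
    induction hx using Submodule.mul_induction_on' with
    | mem_mul_mem y hy z hz =>
      obtain ⟨F, hF1, hF2, hF3⟩ := ih hy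
      obtain ⟨G, hG1, hG2, hG3⟩ := exists_poly_deg_one hz
      exact ⟨F * G, hF1.mul hG1, hF2.mul hG2, by rw [map_mul, hF3, hG3]⟩
    | add y hy z hz hy' hz' =>
      obtain ⟨F, hF1, hF2, hF3⟩ := hy'
      obtain ⟨G, hG1, hG2, hG3⟩ := hz'
      exact ⟨F + G, hF1.add hG1, hF2.add hG2, by rw [map_add, hF3, hG3]⟩

/-- Surjectivity with coefficients: every element of `K * (pref a c) ^ d` is the value of
a homogeneous degree-`d` polynomial in the first `c` variables with coefficients in `K`. -/
lemma exists_poly_of_mem_mul {K : Ideal A} {c d : ℕ} {x : A} (hx : x ∈ K * pref a c ^ d) :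
    ∃ F : MvPolynomial (Fin k) A, Hom d F ∧ Vars c F ∧ (∀ m, F.coeff m ∈ K) ∧
      eval a F = x := by
  induction hx using Submodule.mul_induction_on' with
  | mem_mul_mem y hy z hz =>
    obtain ⟨F, hF1, hF2, hF3⟩ := exists_poly_of_mem_pow hz
    refine ⟨C y * F, hF1.C_mul y, hF2.C_mul y, fun m => ?_, by rw [map_mul, eval_C, hF3]⟩
    rw [coeff_C_mul]
    exact Ideal.mul_mem_right _ _ hy
  | add y hy z hz hy' hz' =>
    obtain ⟨F, hF1, hF2, hF3, hF4⟩ := hy'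
    obtain ⟨G, hG1, hG2, hG3, hG4⟩ := hz'
    exact ⟨F + G, hF1.add hG1, hF2.add hG2,
      fun m => by rw [coeff_add]; exact Ideal.add_mem _ (hF3 m) (hG3 m),
      by rw [map_add, hF4, hG4]⟩

/-- Degree-zero case. -/
lemma coeff_eq_zero_of_hom_zero {F : MvPolynomial (Fin k) A}
    (hVars : Vars 0 F) (heval : eval a F = 0) (m : Fin k →₀ ℕ) :
    F.coeff m = 0 := by
  have hC : F = C (F.coeff 0) := by
    ext m'
    rw [coeff_C]
    split
    · subst ‹0 = m'›; rfl
    · by_contra h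
      exact ‹¬ (0 = m')›
        (Finsupp.ext fun i => by simpa using hVars m' h i (Nat.zero_le _)).symm
  by_cases hm : F.coeff m = 0
  · exact hm
  · have h0 : m = 0 := Finsupp.ext fun i => by simpa using hVars m hm i (Nat.zero_le _)
    rw [h0]
    have : eval a F = F.coeff 0 := by conv_lhs => rw [hC, eval_C]
    rw [← this, heval]


lemma Hom.sub {d : ℕ} {F G : MvPolynomial (Fin k) A} (hF : Hom d F) (hG : Hom d G) :
    Hom d (F - G) := by
  intro m hm
  rw [coeff_sub] at hm
  rcases (by by_contra h; push_neg at h; simp [h.1, h.2] at hm :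
    F.coeff m ≠ 0 ∨ G.coeff m ≠ 0) with h | h
  · exact hF m h
  · exact hG m h

lemma Vars.sub {c : ℕ} {F G : MvPolynomial (Fin k) A} (hF : Vars c F) (hG : Vars c G) :
    Vars c (F - G) := by
  intro m hm i hi
  rw [coeff_sub] at hm
  rcases (by by_contra h; push_neg at h; simp [h.1, h.2] at hm :
    F.coeff m ≠ 0 ∨ G.coeff m ≠ 0) with h | h
  · exact hF m h i hi
  · exact hG m h i hi

/-- The "mem version" at a fixed level and degree follows from the "eq version". -/
lemma mem_version {c d : ℕ}
    (hE : ∀ F : MvPolynomial (Fin k) A, Hom d F → Vars c F → eval a F = 0 →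
      ∀ m, F.coeff m ∈ pref a c)
    {F : MvPolynomial (Fin k) A} (hHom : Hom d F) (hVars : Vars c F)
    (hval : eval a F ∈ pref a c ^ (d + 1)) : ∀ m, F.coeff m ∈ pref a c := by
  rw [pow_succ'] at hval
  obtain ⟨P, hP1, hP2, hP3, hP4⟩ := exists_poly_of_mem_mul hval
  have h0 : eval a (F - P) = 0 := by rw [map_sub, hP4, sub_self]
  have := hE (F - P) (hHom.sub hP1) (hVars.sub hP2) h0
  intro m
  have h' : F.coeff m = (F - P).coeff m + P.coeff m := by rw [coeff_sub]; ring
  rw [h']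
  exact Ideal.add_mem _ (this m) (hP3 m)

/-- The colon-ideal claim: if `r` is regular modulo `pref a c` and the sequence in the
first `c` variables satisfies the "eq version", then `(pref a c ^ m : r) = pref a c ^ m`. -/
lemma colon {c : ℕ} {r : A}
    (hE : ∀ d, ∀ F : MvPolynomial (Fin k) A, Hom d F → Vars c F → eval a F = 0 →
      ∀ m, F.coeff m ∈ pref a c)
    (hreg : ∀ x : A, r * x ∈ pref a c → x ∈ pref a c)
    {m : ℕ} {x : A} (hx : r * x ∈ pref a c ^ m) : x ∈ pref a c ^ m := by
  suffices h : ∀ j, j ≤ m → x ∈ pref a c ^ j from h m le_rfl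
  intro j
  induction j with
  | zero => intro _; rw [pow_zero, Ideal.one_eq_top]; exact Submodule.mem_top
  | succ j ih =>
    intro hj
    obtain ⟨Q, hQ1, hQ2, hQ3⟩ := exists_poly_of_mem_pow (ih (Nat.le_of_succ_le hj))
    have hevalQ : eval a (C r * Q) ∈ pref a c ^ (j + 1) := by
      rw [map_mul, eval_C, hQ3]
      exact Ideal.pow_le_pow_right hj hx
    have hco := mem_version (hE j) (hQ1.C_mul r) (hQ2.C_mul r) hevalQ
    have hcoQ : ∀ m', Q.coeff m' ∈ pref a c := by
      intro m'
      have := hco m'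
      rw [coeff_C_mul] at this
      exact hreg _ this
    rw [pow_succ', ← hQ3]
    exact eval_mem_mul _ hQ1 hQ2 hcoQ

/-- A homogeneous polynomial of degree `0` evaluating to `0` is `0`. -/
lemma coeff_eq_zero_of_hom_zero' {F : MvPolynomial (Fin k) A}
    (hHom : Hom 0 F) (heval : eval a F = 0) (m : Fin k →₀ ℕ) : F.coeff m = 0 := by
  have hsupp : ∀ m' : Fin k →₀ ℕ, F.coeff m' ≠ 0 → m' = 0 := by
    intro m' hm'
    have := hHom m' hm'
    rw [Finset.sum_eq_zero_iff] at this
    exact Finsupp.ext fun i => this i (Finset.mem_univ i)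
  have hC : F = C (F.coeff 0) := by
    ext m'
    rw [coeff_C]
    split
    · subst ‹0 = m'›; rfl
    · by_contra h
      exact ‹¬ (0 = m')› (hsupp m' h).symm
  by_cases hm : F.coeff m = 0
  · exact hm
  · rw [hsupp m hm]
    have : eval a F = F.coeff 0 := by conv_lhs => rw [hC, eval_C]
    rw [← this, heval]

/-- The key quasi-regularity statement: if a homogeneous polynomial of degree `d` in the
first `c` variables evaluates to zero, all of its coefficients lie in `pref a c`. -/
theorem key (hreg : ∀ (c : ℕ) (hc : c < k), ∀ x : A,
      a ⟨c, hc⟩ * x ∈ pref a c → x ∈ pref a c) :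
    ∀ c d (F : MvPolynomial (Fin k) A), Hom d F → Vars c F → eval a F = 0 →
      ∀ m, F.coeff m ∈ pref a c := by
  intro c
  induction c with
  | zero =>
    intro d F _ hVars heval m
    rw [coeff_eq_zero_of_hom_zero hVars heval m]
    exact zero_mem _
  | succ c ihc =>
    by_cases hck : c < k
    · intro d
      induction d using Nat.strong_induction_on with
      | _ d ihd =>
        intro F hHom hVars heval m
        rcases Nat.eq_zero_or_pos d with rfl | hd
        · rw [coeff_eq_zero_of_hom_zero' hHom heval m]
          exact zero_mem _
        set ι : Fin k := ⟨c, hck⟩ with hι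
        set s : Fin k →₀ ℕ := Finsupp.single ι 1 with hs
        set H : MvPolynomial (Fin k) A := F.divMonomial s with hH
        set G : MvPolynomial (Fin k) A := F.modMonomial s with hG
        have hFGH : monomial s 1 * H + G = F := F.divMonomial_add_modMonomial s
        have hGcoeff : ∀ m', G.coeff m' ≠ 0 → G.coeff m' = F.coeff m' ∧ m' ι = 0 := by
          intro m' hm'
          by_cases hmi : m' ι = 0
          · have hns : ¬ s ≤ m' := by
              rw [hs, Finsupp.single_le_iff, hmi]
              exact Nat.not_succ_le_zero 0
            exact ⟨F.coeff_modMonomial_of_not_le hns, hmi⟩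
          · exfalso
            have hls : s ≤ m' := by
              rw [hs, Finsupp.single_le_iff]
              exact Nat.one_le_iff_ne_zero.mpr hmi
            exact hm' (F.coeff_modMonomial_of_le hls)
        have hHomG : Hom d G := fun m' hm' => by
          have h := hGcoeff m' hm'
          exact hHom m' (h.1 ▸ hm')
        have hVarsG : Vars c G := by
          intro m' hm' i hi
          obtain ⟨he, hzc⟩ := hGcoeff m' hm'
          rcases Nat.lt_or_ge (i : ℕ) (c + 1) with h | h
          · have : i = ι := Fin.ext (Nat.le_antisymm (Nat.lt_succ_iff.mp h) hi)
            rw [this]; exact hzc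
          · exact hVars m' (he ▸ hm') i h
        have hcoeffH : ∀ m', H.coeff m' = F.coeff (s + m') :=
          fun m' => F.coeff_divMonomial s m'
        have hsum_s : ∑ i, s i = 1 := by
          rw [hs]
          simp [Finsupp.single_apply]
        have hHomH : Hom (d - 1) H := by
          intro m' hm'
          rw [hcoeffH m'] at hm'
          have h0 := hHom _ hm'
          have hsum : (∑ i, s i) + ∑ i, m' i = d := by
            rw [← Finset.sum_add_distrib]
            exact h0
          rw [hsum_s] at hsum
          omega
        have hVarsH : Vars (c + 1) H := by
          intro m' hm' i hi
          rw [hcoeffH m'] at hm'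
          have := hVars _ hm' i hi
          have : s i + m' i = 0 := this
          omega
        have hmon : eval a (monomial s (1 : A)) = a ι := by
          rw [hs]
          simp [eval_monomial]
        have hevalF : a ι * eval a H + eval a G = 0 := by
          rw [← heval]
          conv_rhs => rw [← hFGH]
          rw [map_add, map_mul, hmon]
        have hGmem : eval a G ∈ pref a c ^ d := eval_mem_pow hHomG hVarsG
        have haH : a ι * eval a H ∈ pref a c ^ d := by
          have : a ι * eval a H = -eval a G := by linear_combination hevalF
          rw [this]
          exact neg_mem hGmem
        have hHmem : eval a H ∈ pref a c ^ d := colon ihc (hreg c hck) haH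
        have hHmem' : eval a H ∈ pref a (c + 1) ^ ((d - 1) + 1) := by
          rw [Nat.sub_add_cancel hd]
          exact Ideal.pow_right_mono (pref_mono (Nat.le_succ c)) d hHmem
        have hcoH : ∀ m', H.coeff m' ∈ pref a (c + 1) :=
          mem_version (ihd (d - 1) (Nat.sub_lt hd Nat.one_pos)) hHomH hVarsH hHmem'
        obtain ⟨P, hP1, hP2, hP3⟩ := exists_poly_of_mem_pow hHmem
        have hQ : ∀ m', (G + C (a ι) * P).coeff m' ∈ pref a c := by
          apply ihc d
          · exact hHomG.add (hP1.C_mul _)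
          · exact hVarsG.add (hP2.C_mul _)
          · rw [map_add, map_mul, eval_C, hP3]
            exact hevalF ▸ by ring
        have hcoG : ∀ m', G.coeff m' ∈ pref a (c + 1) := by
          intro m'
          have h1 := hQ m'
          rw [coeff_add, coeff_C_mul] at h1
          have h2 : G.coeff m' = (G.coeff m' + a ι * P.coeff m') - a ι * P.coeff m' := by
            ring
          rw [h2]
          exact Submodule.sub_mem _ (pref_mono (Nat.le_succ c) h1)
            (Ideal.mul_mem_right _ _ (a_mem_pref ι (Nat.lt_succ_self c)))
        have hsplit : F.coeff m = (monomial s 1 * H).coeff m + G.coeff m := by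
          conv_lhs => rw [← hFGH]
          rw [coeff_add]
        rw [hsplit]
        refine Ideal.add_mem _ ?_ (hcoG m)
        by_cases hsm : s ≤ m
        · have h1 : (monomial s 1 * H).coeff m = H.coeff (m - s) := by
            have h2 : ((monomial s 1 * H).divMonomial s).coeff (m - s)
                = (monomial s 1 * H).coeff (s + (m - s)) :=
              coeff_divMonomial s _ (m - s)
            rw [divMonomial_monomial_mul, add_tsub_cancel_of_le hsm] at h2
            exact h2.symm
          rw [h1]
          exact hcoH _
        · have h1 : (monomial s 1 * H).coeff m = 0 := by
            have h2 := coeff_modMonomial_of_not_le (s := s) (monomial s 1 * H) hsm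
            rw [monomial_mul_modMonomial] at h2
            rw [← h2, coeff_zero]
          rw [h1]
          exact zero_mem _
    · intro d F hHom hVars heval m
      have hVars' : Vars c F := by
        intro m' hm' i hi
        exact absurd (lt_of_lt_of_le i.2 (Nat.not_lt.mp hck)) (Nat.not_lt.mpr hi)
      rw [pref_stable (Nat.not_lt.mp hck)]
      exact ihc d F hHom hVars' heval m


lemma pref_eq_ofList_take (c : ℕ) :
    Ideal.ofList ((List.ofFn a).take c) = pref a c := by
  have hset : {r | r ∈ (List.ofFn a).take c} = a '' {i : Fin k | (i : ℕ) < c} := by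
    ext r
    simp only [Set.mem_setOf_eq, Set.mem_image]
    constructor
    · intro hr
      rw [List.mem_iff_getElem] at hr
      obtain ⟨m, hm, he⟩ := hr
      rw [List.length_take, List.length_ofFn] at hm
      have hmc : m < c := lt_of_lt_of_le hm (min_le_left _ _)
      have hmk : m < k := lt_of_lt_of_le hm (min_le_right _ _)
      refine ⟨⟨m, hmk⟩, hmc, ?_⟩
      rw [← he, List.getElem_take, List.getElem_ofFn]
    · rintro ⟨i, hi, rfl⟩
      rw [List.mem_iff_getElem]
      have hlen : (i : ℕ) < ((List.ofFn a).take c).length := by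
        rw [List.length_take, List.length_ofFn]
        exact lt_min hi i.2
      refine ⟨i, hlen, ?_⟩
      rw [List.getElem_take, List.getElem_ofFn]
  unfold pref
  rw [← hset]

lemma pref_top : pref a k = Ideal.span (Set.range a) := by
  unfold pref
  have : {i : Fin k | (i : ℕ) < k} = Set.univ := by
    ext i; simp [i.2]
  rw [this, Set.image_univ]

lemma hreg_of_isRegular (ha : RingTheory.Sequence.IsRegular A (List.ofFn a)) :
    ∀ (c : ℕ) (hc : c < k), ∀ x : A, a ⟨c, hc⟩ * x ∈ pref a c → x ∈ pref a c := by
  intro c hc x hx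
  have hlen : c < (List.ofFn a).length := by rw [List.length_ofFn]; exact hc
  have h1 := ha.toIsWeaklyRegular.regular_mod_prev c hlen
  have hsm : (Ideal.ofList ((List.ofFn a).take c) • ⊤ : Submodule A A) = pref a c := by
    rw [← pref_eq_ofList_take (a := a) c]
    simp
  have hel : (List.ofFn a)[c]'hlen = a ⟨c, hc⟩ := List.getElem_ofFn _
  rw [hel, hsm] at h1
  have h2 : a ⟨c, hc⟩ • (Submodule.Quotient.mk x : A ⧸ (pref a c : Submodule A A)) = 0 := by
    rw [← Submodule.Quotient.mk_smul, smul_eq_mul]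
    rw [Submodule.Quotient.mk_eq_zero]
    exact hx
  have h3 := h1 (h2.trans (smul_zero _).symm)
  rwa [Submodule.Quotient.mk_eq_zero] at h3

end QuasiReg



/-- The quotient `Iⁿ/Iⁿ⁺¹` of the submodule `Iⁿ ⊆ A` by `Iⁿ⁺¹`. -/
noncomputable abbrev powQuot (A : Type) [CommRing A] (I : Ideal A) (n : ℕ) :=
  ↥(I ^ n) ⧸ (Submodule.comap (I ^ n).subtype (I ^ (n + 1)))

lemma powQuot_isTorsion (A : Type) [CommRing A] (I : Ideal A) (n : ℕ) :
    Module.IsTorsionBySet A (powQuot A I n) I := by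
  intro x a
  obtain ⟨y, rfl⟩ := Submodule.Quotient.mk_surjective _ x
  rw [← Submodule.Quotient.mk_smul, Submodule.Quotient.mk_eq_zero, Submodule.mem_comap]
  show (a : A) • (y : A) ∈ I ^ (n + 1)
  rw [smul_eq_mul, pow_succ']
  exact Ideal.mul_mem_mul a.2 y.2

/-- `Iⁿ/Iⁿ⁺¹` is a module over `A/I`. -/
noncomputable instance powQuotModule (A : Type) [CommRing A] (I : Ideal A) (n : ℕ) :
    Module (A ⧸ I) (powQuot A I n) :=
  Module.IsTorsionBySet.module (I := I) (by
    intro x a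
    obtain ⟨y, rfl⟩ := Submodule.Quotient.mk_surjective _ x
    rw [← Submodule.Quotient.mk_smul, Submodule.Quotient.mk_eq_zero, Submodule.mem_comap]
    show (a : A) • (y : A) ∈ I ^ (n + 1)
    rw [smul_eq_mul, pow_succ']
    exact Ideal.mul_mem_mul a.2 y.2)

/-- if `a₁, …, aₖ` is a regular sequence generating the ideal `I` of a
commutative ring `A`, then for every `n ≥ 0` the `A/I`-module `Iⁿ/Iⁿ⁺¹` is free, with basis
the residue classes of the monomials `a₁^{α₁}⋯aₖ^{αₖ}` for `(α₁, …, αₖ)` ranging over the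
`k`-tuples of natural numbers with `α₁ + ⋯ + αₖ = n`. -/
theorem powQuot_basis_monomials
    (A : Type) [CommRing A] (k : ℕ) (a : Fin k → A)
    (ha : RingTheory.Sequence.IsRegular A (List.ofFn a))
    (I : Ideal A) (hI : I = Ideal.span (Set.range a)) (n : ℕ) :
    ∃ b : Module.Basis { α : Fin k → ℕ // ∑ i, α i = n } (A ⧸ I) (powQuot A I n),
      ∀ α : { α : Fin k → ℕ // ∑ i, α i = n },
        b α = Submodule.Quotient.mk
          (⟨∏ i, a i ^ α.1 i, by
            have ha : ∀ i, a i ∈ I := fun i => hI ▸ Ideal.subset_span ⟨i, rfl⟩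
            have h : ∏ i, a i ^ α.1 i ∈ ∏ i, I ^ α.1 i :=
              Ideal.prod_mem_prod fun i _ => Ideal.pow_mem_pow (ha i) _
            rwa [Finset.prod_pow_eq_pow_sum, α.2] at h⟩ : ↥(I ^ n)) := by
    classical
  have hprefI : QuasiReg.pref a k = I := by rw [QuasiReg.pref_top, hI]
  have hreg := QuasiReg.hreg_of_isRegular ha
  have hkey := QuasiReg.key hreg k
  -- the family of monomials
  have vmem : ∀ α : { α : Fin k → ℕ // ∑ i, α i = n }, ∏ i, a i ^ α.1 i ∈ I ^ n := by
    intro α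
    have ham : ∀ i, a i ∈ I := fun i => hI ▸ Ideal.subset_span ⟨i, rfl⟩
    have h : ∏ i, a i ^ α.1 i ∈ ∏ i, I ^ α.1 i :=
      Ideal.prod_mem_prod fun i _ => Ideal.pow_mem_pow (ham i) _
    rwa [Finset.prod_pow_eq_pow_sum, α.2] at h
  set v : { α : Fin k → ℕ // ∑ i, α i = n } → powQuot A I n :=
    fun α => Submodule.Quotient.mk ⟨∏ i, a i ^ α.1 i, vmem α⟩ with hv
  -- the smul on the quotient is induced by the ring action
  have hsmul : ∀ (r : A) (y : ↥(I ^ n)),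
      (Ideal.Quotient.mk I r) • (Submodule.Quotient.mk y : powQuot A I n) =
        Submodule.Quotient.mk (r • y) := by
    intro r y
    exact (Module.IsTorsionBySet.mk_smul (powQuot_isTorsion A I n) r
      (Submodule.Quotient.mk y)).trans (Submodule.Quotient.mk_smul _ r y)
  have hsum : ∀ {ι' : Type} (s : Finset ι') (cf : ι' → A) (y : ι' → ↥(I ^ n)),
      (∑ j ∈ s, (Ideal.Quotient.mk I (cf j)) •
        (Submodule.Quotient.mk (y j) : powQuot A I n)) =
        Submodule.Quotient.mk (∑ j ∈ s, cf j • y j) := by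
    intro ι' s cf y
    calc (∑ j ∈ s, (Ideal.Quotient.mk I (cf j)) •
          (Submodule.Quotient.mk (y j) : powQuot A I n))
        = ∑ j ∈ s, Submodule.mkQ _ (cf j • y j) := by
          refine Finset.sum_congr rfl fun j _ => ?_
          rw [hsmul]
          rfl
      _ = Submodule.mkQ _ (∑ j ∈ s, cf j • y j) := (map_sum _ _ _).symm

  -- linear independence
  have hli : LinearIndependent (A ⧸ I) v := by
    rw [linearIndependent_iff']
    intro s g hrel α hα
    have hlift : ∀ β, ∃ r : A, Ideal.Quotient.mk I r = g β :=
      fun β => Ideal.Quotient.mk_surjective _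
    choose cf hcf using hlift
    set F : MvPolynomial (Fin k) A :=
      ∑ β ∈ s, MvPolynomial.monomial (Finsupp.equivFunOnFinite.symm β.1) (cf β) with hF
    have hcoeffF : ∀ β ∈ s, F.coeff (Finsupp.equivFunOnFinite.symm β.1) = cf β := by
      intro β hβ
      rw [hF, MvPolynomial.coeff_sum]
      rw [Finset.sum_eq_single_of_mem β hβ]
      · rw [MvPolynomial.coeff_monomial, if_pos rfl]
      · intro γ _ hγβ
        rw [MvPolynomial.coeff_monomial, if_neg]
        intro h
        exact hγβ (Subtype.ext (Finsupp.equivFunOnFinite.symm.injective h))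
    have hHomF : QuasiReg.Hom n F := by
      intro m hm
      rw [hF, MvPolynomial.coeff_sum] at hm
      obtain ⟨β, _, hβ⟩ := Finset.exists_ne_zero_of_sum_ne_zero hm
      rw [MvPolynomial.coeff_monomial] at hβ
      split at hβ
      case isTrue h =>
        subst h
        calc ∑ i, (Finsupp.equivFunOnFinite.symm β.1) i = ∑ i, β.1 i := by
              refine Finset.sum_congr rfl fun i _ => ?_
              simp
          _ = n := β.2
      case isFalse => exact absurd rfl hβ
    have hVarsF : QuasiReg.Vars k F := by
      intro m hm i hi
      exact absurd (lt_of_lt_of_le i.2 hi) (lt_irrefl _)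
    have hevalF : MvPolynomial.eval a F = ∑ β ∈ s, cf β * ∏ i, a i ^ β.1 i := by
      rw [hF, map_sum]
      refine Finset.sum_congr rfl fun β _ => ?_
      rw [MvPolynomial.eval_monomial, Finsupp.prod_pow]
      simp
    have hrel' : MvPolynomial.eval a F ∈ I ^ (n + 1) := by
      have h1 : (∑ β ∈ s, (Ideal.Quotient.mk I (cf β)) •
          (Submodule.Quotient.mk (⟨∏ i, a i ^ β.1 i, vmem β⟩ : ↥(I ^ n))
            : powQuot A I n)) = 0 := by
        rw [← hrel]
        refine Finset.sum_congr rfl fun β _ => ?_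
        rw [hcf]
      rw [hsum] at h1
      rw [Submodule.Quotient.mk_eq_zero, Submodule.mem_comap] at h1
      have h2 : ((∑ β ∈ s, cf β • (⟨∏ i, a i ^ β.1 i, vmem β⟩ : ↥(I ^ n)) : ↥(I ^ n))
          : A) = MvPolynomial.eval a F := by
        rw [hevalF]
        push_cast
        rfl
      rwa [← h2]
    have hmem : ∀ m, F.coeff m ∈ I := by
      intro m
      have := QuasiReg.mem_version (hkey n) hHomF hVarsF (by rwa [hprefI]) m
      rwa [hprefI] at this
    have hcα : cf α ∈ I := by
      rw [← hcoeffF α hα]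
      exact hmem _
    rw [← hcf α, Ideal.Quotient.eq_zero_iff_mem]
    exact hcα
  -- spanning
  have hspan : ⊤ ≤ Submodule.span (A ⧸ I) (Set.range v) := by
    intro x _
    obtain ⟨y, rfl⟩ := Submodule.Quotient.mk_surjective _ x
    have hy : (y : A) ∈ QuasiReg.pref a k ^ n := by rw [hprefI]; exact y.2
    obtain ⟨F, hF1, hF2, hF3⟩ := QuasiReg.exists_poly_of_mem_pow hy
    have key : (Submodule.Quotient.mk y : powQuot A I n) =
        ∑ m ∈ F.support.attach, (Ideal.Quotient.mk I (F.coeff m.1)) •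
          v ⟨fun i => m.1 i, hF1 m.1 (MvPolynomial.mem_support_iff.mp m.2)⟩ := by
      rw [hv]
      rw [hsum F.support.attach (fun m => F.coeff m.1)
        (fun m => ⟨∏ i, a i ^ m.1 i,
          vmem ⟨fun i => m.1 i, hF1 m.1 (MvPolynomial.mem_support_iff.mp m.2)⟩⟩)]
      congr 1
      refine Subtype.ext ?_
      simp only [AddSubmonoidClass.coe_finset_sum, SetLike.val_smul, smul_eq_mul]
      rw [Finset.sum_attach F.support (fun m => F.coeff m * ∏ i, a i ^ m i),
        ← MvPolynomial.eval_eq', hF3]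
    rw [key]
    exact Submodule.sum_mem _ fun m _ => Submodule.smul_mem _ _
      (Submodule.subset_span ⟨_, rfl⟩)
  refine ⟨Module.Basis.mk hli hspan, fun α => ?_⟩
  rw [Module.Basis.mk_apply]
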